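/- For every even integer k ≥ 2, the cyclic propagator integral satisfies I_k = ∫_{[0,1]^k} ∏_{i=0}^{k−1} (fract(t_{(i+1) mod k} − t_i) − 1/2) dt₁ ⋯ dt_k = 2 · (−1)^{k/2} · ζ(k) / (2π)^k, where ζ(k) = ∑_{n=1}^{∞} n^{−k}. (Equivalently I_k = 2ζ(k)/(2πi)^k; this is the weight of the k-vertex wheel Feynman diagram in the one-loop computation of the algebraic index, producing the Â-genus.) -/

import Mathlib

open MeasureTheory Real

noncomputable section

/-- The cyclic propagator integral
`I_k = ∫_{[0,1]^k} ∏_{i=0}^{k−1} (fract(t_{(i+1) mod k} − t_i) − 1/2) dt₁ ⋯ dt_k`,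
where the propagator is `P(x) = fract(x) − 1/2` and the indices are taken cyclically. -/
def cyclicPropagatorIntegral (k : ℕ) : ℝ :=
  ∫ t in Set.univ.pi (fun _ : Fin k => Set.Icc (0:ℝ) 1),
    ∏ i : Fin k,
      (Int.fract (t ⟨((i : ℕ) + 1) % k, Nat.mod_lt _ (by have := i.isLt; omega)⟩ - t i)
        - 1/2)

/-- `ζ(k) = ∑_{n=1}^{∞} n^{−k}` as a real number. -/
def zetaSum (k : ℕ) : ℝ := ∑' n : ℕ, 1 / ((n : ℝ) + 1)^k

namespace CyclicPropagatorAux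

/-- The propagator `P(x) = fract x - 1/2`. -/
def Pf (x : ℝ) : ℝ := Int.fract x - 1/2

lemma Pf_periodic : Function.Periodic Pf 1 := by
  intro x; simp [Pf, Int.fract_add_one]

lemma Pf_abs_le (x : ℝ) : |Pf x| ≤ 1 := by
  rw [abs_le]
  constructor <;> simp only [Pf] <;>
    [linarith [Int.fract_nonneg x]; linarith [(Int.fract_lt_one x).le]]

lemma Pf_measurable : Measurable Pf := (measurable_fract).sub_const _

/-- The (signed, normalized) periodized Bernoulli function. -/
def pB (m : ℕ) (x : ℝ) : ℝ := (-1)^(m-1) * bernoulliFun m (Int.fract x) / m.factorial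

lemma bernoulliFun_continuous (m : ℕ) : Continuous (bernoulliFun m) := by
  unfold bernoulliFun; exact Polynomial.continuous _

lemma bernoulliFun_one' (x : ℝ) : bernoulliFun 1 x = x - 1/2 := by
  simp [bernoulliFun, Polynomial.bernoulli_def, Finset.sum_range_succ,
    _root_.bernoulli_zero, _root_.bernoulli_one, Polynomial.eval_monomial]
  ring

lemma pB_one : pB 1 = Pf := by
  funext x
  simp only [pB, Pf, pow_zero, Nat.factorial_one, bernoulliFun_one']
  push_cast; ring

lemma pB_periodic (m : ℕ) : Function.Periodic (pB m) 1 := by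
  intro x; simp [pB, Int.fract_add_one]

lemma bernoulliFun_fract_bound (m : ℕ) :
    ∃ C : ℝ, ∀ y : ℝ, |bernoulliFun m (Int.fract y)| ≤ C := by
  obtain ⟨C, hC⟩ := (isCompact_Icc (a := (0:ℝ)) (b := 1)).exists_bound_of_continuousOn
    (bernoulliFun_continuous m).continuousOn
  exact ⟨C, fun y => hC _ ⟨Int.fract_nonneg y, (Int.fract_lt_one y).le⟩⟩

lemma bounded_measurable_intervalIntegrable (f : ℝ → ℝ) (hf : Measurable f) (C : ℝ)
    (hC : ∀ x, |f x| ≤ C) (a b : ℝ) : IntervalIntegrable f volume a b := by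
  rw [intervalIntegrable_iff]
  refine Integrable.mono' (g := fun _ => C) ?_ hf.aestronglyMeasurable (ae_of_all _ hC)
  have : volume (Set.uIoc a b) < ⊤ := by rw [Set.uIoc]; exact measure_Ioc_lt_top
  exact (integrableOn_const this.ne)

lemma hasDerivAt_G (m : ℕ) (c : ℝ) (t : ℝ) :
    HasDerivAt (fun t => -(bernoulliFun (m+1) (c - t)) * (t - 1/2) / ((m:ℝ)+1)
      - bernoulliFun (m+2) (c - t) / (((m:ℝ)+1)*((m:ℝ)+2)))
      (bernoulliFun m (c - t) * (t - 1/2)) t := by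
  have h1 : HasDerivAt (fun t : ℝ => c - t) (-1) t := by
    simpa using (hasDerivAt_id t).const_sub c
  have h2 := (hasDerivAt_bernoulliFun (m+1) (c - t)).comp t h1
  have h3 := (hasDerivAt_bernoulliFun (m+2) (c - t)).comp t h1
  simp only [Nat.add_sub_cancel] at h2 h3
  have h4 : HasDerivAt (fun t : ℝ => t - 1/2) 1 t := (hasDerivAt_id t).sub_const _
  have h5 := ((h2.neg.mul h4).div_const ((m:ℝ)+1)).sub
    (h3.div_const (((m:ℝ)+1)*((m:ℝ)+2)))
  refine h5.congr_deriv ?_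
  have hm1 : ((m:ℝ)+1) ≠ 0 := by positivity
  have hm2 : ((m:ℝ)+2) ≠ 0 := by positivity
  rw [show m + 2 - 1 = m + 1 from rfl]
  simp only [Pi.neg_apply, Function.comp_apply]
  push_cast
  field_simp
  ring

lemma integral_G (m : ℕ) (c : ℝ) (a b : ℝ) :
    ∫ t in a..b, bernoulliFun m (c - t) * (t - 1/2)
      = (-(bernoulliFun (m+1) (c - b)) * (b - 1/2) / ((m:ℝ)+1)
          - bernoulliFun (m+2) (c - b) / (((m:ℝ)+1)*((m:ℝ)+2)))
        - (-(bernoulliFun (m+1) (c - a)) * (a - 1/2) / ((m:ℝ)+1)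
          - bernoulliFun (m+2) (c - a) / (((m:ℝ)+1)*((m:ℝ)+2))) := by
  refine intervalIntegral.integral_eq_sub_of_hasDerivAt (fun t _ => hasDerivAt_G m c t) ?_
  apply Continuous.intervalIntegrable
  exact ((bernoulliFun_continuous m).comp (continuous_const.sub continuous_id)).mul
    (continuous_id.sub continuous_const)

lemma conv_core (m : ℕ) (hm : 1 ≤ m) (X : ℝ) (hX0 : 0 ≤ X) (hX1 : X < 1) :
    ∫ t in (0:ℝ)..1, bernoulliFun m (Int.fract (X - t)) * (Int.fract t - 1/2)
      = -bernoulliFun (m+1) X / ((m:ℝ)+1) := by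
  obtain ⟨C, hC⟩ := bernoulliFun_fract_bound m
  have hmeas : Measurable (fun t => bernoulliFun m (Int.fract (X - t)) * (Int.fract t - 1/2)) := by
    exact ((bernoulliFun_continuous m).measurable.comp
      (measurable_fract.comp (measurable_const.sub measurable_id))).mul
      ((measurable_fract.comp measurable_id).sub measurable_const)
  have hbd : ∀ t : ℝ, |bernoulliFun m (Int.fract (X - t)) * (Int.fract t - 1/2)| ≤ C * 1 := by
    intro t
    rw [abs_mul]
    refine mul_le_mul (hC _) ?_ (abs_nonneg _) ((abs_nonneg _).trans (hC (X - t)))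
    rw [abs_le]
    constructor
    · linarith [Int.fract_nonneg t]
    · linarith [(Int.fract_lt_one t).le]
  have hint := bounded_measurable_intervalIntegrable _ hmeas _ hbd
  rw [← intervalIntegral.integral_add_adjacent_intervals (a := (0:ℝ)) (b := X) (c := 1)
    (hint 0 X) (hint X 1)]
  have h1 : ∫ t in (0:ℝ)..X, bernoulliFun m (Int.fract (X - t)) * (Int.fract t - 1/2)
      = ∫ t in (0:ℝ)..X, bernoulliFun m (X - t) * (t - 1/2) := by
    refine intervalIntegral.integral_congr fun t ht => ?_
    rw [Set.uIcc_of_le hX0] at ht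
    obtain ⟨ht0, htX⟩ := ht
    rw [Int.fract_eq_self.2 ⟨by linarith, by linarith⟩,
      Int.fract_eq_self.2 ⟨ht0, by linarith⟩]
  have h2 : ∫ t in X..(1:ℝ), bernoulliFun m (Int.fract (X - t)) * (Int.fract t - 1/2)
      = ∫ t in X..(1:ℝ), bernoulliFun m ((X + 1) - t) * (t - 1/2) := by
    refine intervalIntegral.integral_congr_ae ?_
    have h1 : ∀ᵐ t : ℝ, t ∉ ({1} : Set ℝ) :=
      measure_eq_zero_iff_ae_notMem.mp (Real.volume_singleton)
    filter_upwards [h1] with t ht hmem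
    rw [Set.uIoc_of_le hX1.le] at hmem
    obtain ⟨htX, ht1⟩ := hmem
    have ht1' : t < 1 := lt_of_le_of_ne ht1 (by simpa using ht)
    have hfr : Int.fract (X - t) = X + 1 - t := by
      rw [show X - t = (X + 1 - t) + (-1 : ℤ) by push_cast; ring, Int.fract_add_intCast]
      exact Int.fract_eq_self.2 ⟨by linarith, by linarith⟩
    rw [hfr, Int.fract_eq_self.2 ⟨by linarith, ht1'⟩]
  rw [h1, h2, integral_G, integral_G]
  have hend1 := bernoulliFun_endpoints_eq_of_ne_one (k := m+1) (by omega)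
  have hend2 := bernoulliFun_endpoints_eq_of_ne_one (k := m+2) (by omega)
  have e1 : X - X = 0 := by ring
  have e2 : X + 1 - 1 = X := by ring
  have e3 : X + 1 - X = 1 := by ring
  have e4 : X - 0 = X := by ring
  rw [e1, e2, e3, e4, hend1, hend2, bernoulliFun_eval_zero, bernoulliFun_eval_zero]
  have hm1 : ((m:ℝ)+1) ≠ 0 := by positivity
  have hm2 : ((m:ℝ)+2) ≠ 0 := by positivity
  field_simp
  ring

lemma pB_conv (m : ℕ) (hm : 1 ≤ m) (x : ℝ) :
    ∫ t in (0:ℝ)..1, pB m (x - t) * Pf t = pB (m+1) x := by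
  have hfr : ∀ t : ℝ, Int.fract (x - t) = Int.fract (Int.fract x - t) := by
    intro t
    rw [show x - t = (Int.fract x - t) + (⌊x⌋ : ℤ) by rw [Int.fract]; ring, Int.fract_add_intCast]
  simp only [pB, Pf, hfr]
  rw [show (fun t => (-1:ℝ)^(m-1) * bernoulliFun m (Int.fract (Int.fract x - t)) / m.factorial
      * (Int.fract t - 1/2)) = (fun t => ((-1:ℝ)^(m-1) / m.factorial)
      * (bernoulliFun m (Int.fract (Int.fract x - t)) * (Int.fract t - 1/2))) from
    funext fun t => by ring]
  rw [intervalIntegral.integral_const_mul,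
    conv_core m hm (Int.fract x) (Int.fract_nonneg x) (Int.fract_lt_one x)]
  obtain ⟨j, rfl⟩ := Nat.exists_eq_add_of_le hm
  rw [show 1 + j = j + 1 from by omega]
  have h1 : ((j + 1).factorial : ℝ) ≠ 0 := by positivity
  have h2 : ((j + 1 + 1).factorial : ℝ) ≠ 0 := by positivity
  simp only [Nat.add_sub_cancel, Nat.factorial_succ (j+1), pow_succ]
  push_cast
  field_simp

/-- The chain of propagators: `chain m a t b = P(t₀-a) P(t₁-t₀) ⋯ P(b - t_{m-1})`. -/
def chain : (m : ℕ) → ℝ → (Fin m → ℝ) → ℝ → ℝ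
  | 0, a, _, b => Pf (b - a)
  | (m+1), a, t, b => Pf (t 0 - a) * chain m (t 0) (t ∘ Fin.succ) b

/-- Indicator of `[0,1]`. -/
def chi : ℝ → ℝ := Set.indicator (Set.Icc (0:ℝ) 1) 1

/-- Indicator of the unit cube as a product of indicators. -/
def cubeW {m : ℕ} (t : Fin m → ℝ) : ℝ := ∏ i, chi (t i)

lemma chi_nonneg (x : ℝ) : 0 ≤ chi x := by
  unfold chi; exact Set.indicator_nonneg (fun _ _ => zero_le_one) x

lemma chi_le_one (x : ℝ) : chi x ≤ 1 := by
  unfold chi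
  by_cases h : x ∈ Set.Icc (0:ℝ) 1
  · rw [Set.indicator_of_mem h]; exact le_rfl
  · rw [Set.indicator_of_notMem h]; norm_num

lemma chi_measurable : Measurable chi :=
  (measurable_const.indicator measurableSet_Icc)

lemma chain_abs_le : ∀ (m : ℕ) (a : ℝ) (t : Fin m → ℝ) (b : ℝ), |chain m a t b| ≤ 1
  | 0, _, _, _ => Pf_abs_le _
  | (m+1), a, t, b => by
    rw [chain, abs_mul]
    exact mul_le_one₀ (Pf_abs_le _) (abs_nonneg _) (chain_abs_le m _ _ _)

lemma cubeW_measurable (m : ℕ) : Measurable (cubeW (m := m)) := by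
  unfold cubeW
  exact Finset.measurable_prod _ (fun i _ => chi_measurable.comp (measurable_pi_apply i))

lemma cubeW_nonneg {m : ℕ} (t : Fin m → ℝ) : 0 ≤ cubeW t :=
  Finset.prod_nonneg fun i _ => chi_nonneg _

lemma chi_integrable : Integrable chi := by
  unfold chi
  rw [integrable_indicator_iff measurableSet_Icc]
  exact integrableOn_const (by rw [Real.volume_Icc]; norm_num)

lemma cubeW_integrable (m : ℕ) : Integrable (cubeW (m := m)) := by
  unfold cubeW chi
  exact Integrable.fintype_prod (f := fun _ : Fin m => chi) (fun _ => chi_integrable)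

lemma chain_measurable' (m : ℕ) :
    Measurable (fun p : ℝ × (Fin m → ℝ) × ℝ => chain m p.1 p.2.1 p.2.2) := by
  induction m with
  | zero =>
    simp only [chain]
    exact Pf_measurable.comp ((measurable_snd.snd).sub measurable_fst)
  | succ m ih =>
    simp only [chain]
    apply Measurable.mul
    · exact Pf_measurable.comp
        (((measurable_pi_apply 0).comp (measurable_fst.comp measurable_snd)).sub measurable_fst)
    · have hmap : Measurable (fun p : ℝ × (Fin (m+1) → ℝ) × ℝ =>
          ((p.2.1 0, (p.2.1 ∘ Fin.succ, p.2.2)) : ℝ × (Fin m → ℝ) × ℝ)) := by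
        refine Measurable.prodMk ?_ (Measurable.prodMk ?_ ?_)
        · exact (measurable_pi_apply 0).comp (measurable_fst.comp measurable_snd)
        · exact measurable_pi_lambda _ (fun i =>
            (measurable_pi_apply (Fin.succ i)).comp (measurable_fst.comp measurable_snd))
        · exact measurable_snd.comp measurable_snd
      exact ih.comp hmap

lemma chain_measurable (m : ℕ) (b : ℝ) :
    Measurable (fun p : ℝ × (Fin m → ℝ) => chain m p.1 p.2 b) := by
  have hmap : Measurable (fun p : ℝ × (Fin m → ℝ) => ((p.1, (p.2, b)) : ℝ × (Fin m → ℝ) × ℝ)) :=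
    measurable_fst.prodMk (measurable_snd.prodMk measurable_const)
  exact (chain_measurable' m).comp hmap

lemma chainF_integrable (m : ℕ) (a b : ℝ) :
    Integrable (fun t : Fin m → ℝ => cubeW t * chain m a t b) := by
  refine (cubeW_integrable m).mono' ?_ (ae_of_all _ ?_)
  · exact ((cubeW_measurable m).mul ((chain_measurable m b).comp
      (measurable_const.prodMk measurable_id))).aestronglyMeasurable
  · intro t
    rw [Real.norm_eq_abs, abs_mul, abs_of_nonneg (cubeW_nonneg t)]
    calc cubeW t * |chain m a t b| ≤ cubeW t * 1 :=
      mul_le_mul_of_nonneg_left (chain_abs_le m a t b) (cubeW_nonneg t)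
    _ = cubeW t := mul_one _

lemma integral_peel {m : ℕ} (F : (Fin (m+1) → ℝ) → ℝ) (hF : Integrable F) :
    ∫ t : Fin (m+1) → ℝ, F t = ∫ x : ℝ, ∫ y : Fin m → ℝ, F (Fin.cons x y) := by
  have h := (measurePreserving_piFinSuccAbove (fun _ : Fin (m+1) => (volume : Measure ℝ)) 0).symm
  have hemb := (MeasurableEquiv.piFinSuccAbove (fun _ : Fin (m+1) => ℝ) 0).symm.measurableEmbedding
  rw [volume_pi] at hF
  have hFe : Integrable (fun z : ℝ × (Fin m → ℝ) =>
      F ((MeasurableEquiv.piFinSuccAbove (fun _ : Fin (m+1) => ℝ) 0).symm z))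
      ((volume : Measure ℝ).prod (Measure.pi fun _ : Fin m => volume)) :=
    (h.integrable_comp_emb hemb).2 hF
  rw [volume_pi, ← h.integral_comp', MeasureTheory.integral_prod _ hFe]
  have hpi : (Measure.pi fun _ : Fin m => (volume : Measure ℝ)) = volume := volume_pi.symm
  rw [hpi]
  congr 1; ext x; congr 1; ext y
  congr 1
  simp [MeasurableEquiv.piFinSuccAbove_symm_apply, Fin.insertNthEquiv, Fin.insertNth_zero',
    Fin.insertNth_zero]

lemma indicator_one_mul (g : ℝ → ℝ) (x : ℝ) :
    chi x * g x = Set.indicator (Set.Icc (0:ℝ) 1) g x := by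
  unfold chi
  by_cases h : x ∈ Set.Icc (0:ℝ) 1 <;>
    simp [Set.indicator_of_mem, Set.indicator_of_notMem, h]

lemma conv_final (m : ℕ) (hm : 1 ≤ m) (a b : ℝ) :
    ∫ x in (0:ℝ)..1, Pf (x - a) * pB m (b - x) = pB (m+1) (b - a) := by
  have hper : Function.Periodic (fun s => pB m (b - a - s) * Pf s) 1 := by
    intro s
    simp only []
    rw [show b - a - (s + 1) = (b - a - s) - 1 by ring, (pB_periodic m).sub_eq, Pf_periodic s]
  have h1 : ∫ x in (0:ℝ)..1, Pf (x - a) * pB m (b - x)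
      = ∫ s in (0-a:ℝ)..(1-a), pB m (b - a - s) * Pf s := by
    rw [← intervalIntegral.integral_comp_sub_right (fun s => pB m (b - a - s) * Pf s) a]
    refine intervalIntegral.integral_congr fun x _ => ?_
    rw [show b - a - (x - a) = b - x by ring]
    ring
  rw [h1, show (0-a : ℝ) = -a by ring, show (1-a:ℝ) = -a + 1 by ring,
    hper.intervalIntegral_add_eq (-a) 0, zero_add]
  exact pB_conv m hm (b - a)

lemma chain_integral : ∀ (m : ℕ) (a b : ℝ),
    ∫ t : Fin m → ℝ, cubeW t * chain m a t b = pB (m+1) (b - a) := by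
  intro m
  induction m with
  | zero =>
    intro a b
    have : ∀ t : Fin 0 → ℝ, cubeW t * chain 0 a t b = Pf (b - a) := by
      intro t
      simp [cubeW, chain]
    simp only [this, pB_one]
    simp [volume_pi, integral_const, Measure.pi_empty_univ]
    rw [pB_one]
    simp [measureReal_def, Measure.pi_empty_univ]
  | succ m ih =>
    intro a b
    rw [integral_peel _ (chainF_integrable (m+1) a b)]
    have hpt : ∀ (x : ℝ) (y : Fin m → ℝ),
        cubeW (Fin.cons x y) * chain (m+1) a (Fin.cons x y) b
          = (chi x * Pf (x - a)) * (cubeW y * chain m x y b) := by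
      intro x y
      have hc : cubeW (Fin.cons x y) = chi x * cubeW y := by
        unfold cubeW
        rw [Fin.prod_univ_succ]
        simp [Fin.cons_zero, Fin.cons_succ]
      have hch : chain (m+1) a (Fin.cons x y) b = Pf (x - a) * chain m x y b := by
        have htail : (Fin.cons x y : Fin (m+1) → ℝ) ∘ Fin.succ = y := by
          funext i; simp [Fin.cons_succ]
        rw [chain, Fin.cons_zero, htail]
      rw [hc, hch]; ring
    simp only [hpt]
    have hinner : ∀ x : ℝ, ∫ y : Fin m → ℝ, (chi x * Pf (x - a)) * (cubeW y * chain m x y b)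
        = (chi x * Pf (x - a)) * pB (m+1) (b - x) := by
      intro x
      rw [integral_const_mul, ih x b]
    simp only [hinner]
    have : ∀ x : ℝ, (chi x * Pf (x - a)) * pB (m+1) (b - x)
        = Set.indicator (Set.Icc (0:ℝ) 1) (fun x => Pf (x - a) * pB (m+1) (b - x)) x := by
      intro x
      rw [mul_assoc]
      exact indicator_one_mul (fun z => Pf (z - a) * pB (m+1) (b - z)) x
    simp only [this]
    rw [integral_indicator measurableSet_Icc, MeasureTheory.integral_Icc_eq_integral_Ioc,
      ← intervalIntegral.integral_of_le (by norm_num : (0:ℝ) ≤ 1)]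
    exact conv_final (m+1) (by omega) a b

lemma chain_eq_prod : ∀ (m : ℕ) (b : ℝ) (t : Fin (m+1) → ℝ),
    chain m (t 0) (t ∘ Fin.succ) b
      = Pf (b - t (Fin.last m)) * ∏ i : Fin m, Pf (t i.succ - t i.castSucc) := by
  intro m
  induction m with
  | zero => intro b t; simp [chain, Fin.last]
  | succ m ih =>
    intro b t
    rw [chain, ih b (t ∘ Fin.succ)]
    rw [Fin.prod_univ_succ]
    simp only [Function.comp_apply, Fin.succ_last]
    have : ∏ i : Fin m, Pf (t i.succ.succ - t i.castSucc.succ)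
        = ∏ i : Fin m, Pf (t i.succ.succ - t i.succ.castSucc) := by
      refine Finset.prod_congr rfl fun j _ => ?_
      rw [Fin.succ_castSucc]
    rw [this]
    have hz : (Fin.castSucc (0 : Fin (m+1))) = (0 : Fin (m+2)) := rfl
    ring_nf
    rw [show t (Fin.castSucc 0) = t 0 from by rw [hz]]
    ring

lemma cyclic_eq (m : ℕ) (t : Fin (m+1) → ℝ) :
    (∏ i : Fin (m+1), Pf (t ⟨((i:ℕ)+1) % (m+1), Nat.mod_lt _ (Nat.succ_pos m)⟩ - t i))
      = chain m (t 0) (t ∘ Fin.succ) (t 0) := by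
  rw [chain_eq_prod, Fin.prod_univ_castSucc]
  have hlast : (⟨(((Fin.last m : Fin (m+1)) : ℕ)+1) % (m+1), Nat.mod_lt _ (Nat.succ_pos m)⟩
      : Fin (m+1)) = 0 := by
    apply Fin.ext
    simp [Fin.last, Nat.mod_self]
  have hcs : ∀ i : Fin m, (⟨(((i.castSucc : Fin (m+1)) : ℕ)+1) % (m+1),
      Nat.mod_lt _ (Nat.succ_pos m)⟩ : Fin (m+1)) = i.succ := by
    intro i
    apply Fin.ext
    simp only [Fin.coe_castSucc, Fin.val_succ]
    exact Nat.mod_eq_of_lt (by omega)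
  rw [hlast]
  have : ∏ i : Fin m, Pf (t ⟨(((i.castSucc : Fin (m+1)) : ℕ)+1) % (m+1),
      Nat.mod_lt _ (Nat.succ_pos m)⟩ - t i.castSucc)
      = ∏ i : Fin m, Pf (t i.succ - t i.castSucc) := by
    refine Finset.prod_congr rfl fun i _ => ?_
    rw [hcs i]
  rw [this]
  ring

lemma cyclic_reduction (k : ℕ) (hk : 1 ≤ k) : cyclicPropagatorIntegral k = pB k 0 := by
  obtain ⟨m, rfl⟩ : ∃ m, k = m + 1 := ⟨k - 1, by omega⟩
  rw [cyclicPropagatorIntegral]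
  rw [← integral_indicator (MeasurableSet.univ_pi fun _ => measurableSet_Icc)]
  have hpt : ∀ t : Fin (m+1) → ℝ,
      Set.indicator (Set.univ.pi (fun _ : Fin (m+1) => Set.Icc (0:ℝ) 1))
        (fun t => ∏ i : Fin (m+1),
          (Int.fract (t ⟨((i : ℕ) + 1) % (m+1), Nat.mod_lt _ (by omega)⟩ - t i) - 1/2)) t
      = cubeW t * chain m (t 0) (t ∘ Fin.succ) (t 0) := by
    intro t
    have hprod : (∏ i : Fin (m+1),
        (Int.fract (t ⟨((i : ℕ) + 1) % (m+1), Nat.mod_lt _ (by omega)⟩ - t i) - 1/2))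
        = chain m (t 0) (t ∘ Fin.succ) (t 0) := by
      rw [← cyclic_eq m t]
      rfl
    by_cases h : t ∈ Set.univ.pi (fun _ : Fin (m+1) => Set.Icc (0:ℝ) 1)
    · rw [Set.indicator_of_mem h, hprod]
      have : cubeW t = 1 := by
        unfold cubeW chi
        rw [Finset.prod_eq_one]
        intro i _
        rw [Set.indicator_of_mem (h i (Set.mem_univ i))]
        rfl
      rw [this, one_mul]
    · rw [Set.indicator_of_notMem h]
      obtain ⟨i, hi⟩ : ∃ i, t i ∉ Set.Icc (0:ℝ) 1 := by
        by_contra hc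
        push_neg at hc
        exact h (fun i _ => hc i)
      have : cubeW t = 0 := by
        unfold cubeW chi
        apply Finset.prod_eq_zero (Finset.mem_univ i)
        rw [Set.indicator_of_notMem hi]
      rw [this, zero_mul]
  simp only [hpt]
  have hG : Integrable (fun t : Fin (m+1) → ℝ =>
      cubeW t * chain m (t 0) (t ∘ Fin.succ) (t 0)) := by
    refine (cubeW_integrable (m+1)).mono' ?_ (ae_of_all _ ?_)
    · have hmap2 : Measurable (fun t : Fin (m+1) → ℝ =>
          ((t 0, (t ∘ Fin.succ, t 0)) : ℝ × (Fin m → ℝ) × ℝ)) := by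
        refine Measurable.prodMk (measurable_pi_apply 0)
          (Measurable.prodMk ?_ (measurable_pi_apply 0))
        exact measurable_pi_lambda _ (fun i => measurable_pi_apply (Fin.succ i))
      exact ((cubeW_measurable (m+1)).mul
        ((chain_measurable' m).comp hmap2)).aestronglyMeasurable
    · intro t
      rw [Real.norm_eq_abs, abs_mul, abs_of_nonneg (cubeW_nonneg t)]
      calc cubeW t * |chain m (t 0) (t ∘ Fin.succ) (t 0)| ≤ cubeW t * 1 :=
        mul_le_mul_of_nonneg_left (chain_abs_le m _ _ _) (cubeW_nonneg t)
      _ = cubeW t := mul_one _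
  rw [integral_peel _ hG]
  have hin : ∀ (x : ℝ) (y : Fin m → ℝ),
      cubeW (Fin.cons x y) * chain m ((Fin.cons x y : Fin (m+1) → ℝ) 0)
        ((Fin.cons x y : Fin (m+1) → ℝ) ∘ Fin.succ) ((Fin.cons x y : Fin (m+1) → ℝ) 0)
      = chi x * (cubeW y * chain m x y x) := by
    intro x y
    have hc : cubeW (Fin.cons x y) = chi x * cubeW y := by
      unfold cubeW
      rw [Fin.prod_univ_succ]
      simp [Fin.cons_zero, Fin.cons_succ]
    have htail : (Fin.cons x y : Fin (m+1) → ℝ) ∘ Fin.succ = y := by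
      funext i; simp [Fin.cons_succ]
    rw [hc, htail, Fin.cons_zero]
    ring
  simp only [hin]
  have hinner : ∀ x : ℝ, ∫ y : Fin m → ℝ, chi x * (cubeW y * chain m x y x)
      = chi x * pB (m+1) 0 := by
    intro x
    rw [integral_const_mul, chain_integral m x x, sub_self]
  simp only [hinner]
  rw [integral_mul_const]
  have : ∫ x : ℝ, chi x = 1 := by
    unfold chi
    rw [integral_indicator measurableSet_Icc]
    simp [Real.volume_Icc]
  rw [this, one_mul]

end CyclicPropagatorAux

open CyclicPropagatorAux in
/-- For every even integer `k ≥ 2`, the cyclic propagator integral equals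
`2 · (−1)^(k/2) · ζ(k) / (2π)^k` (equivalently `2ζ(k)/(2πi)^k`): this is the weight of the
`k`-vertex wheel Feynman diagram in the one-loop computation of the algebraic index,
producing the Â-genus. -/
theorem cyclicPropagatorIntegral_even (k : ℕ) (hk : 2 ≤ k) (hke : Even k) :
    cyclicPropagatorIntegral k = 2 * (-1)^(k/2) * zetaSum k / (2*π)^k := by
  obtain ⟨n, hn⟩ := hke
  have hn1 : 1 ≤ n := by omega
  obtain ⟨j, rfl⟩ := Nat.exists_eq_add_of_le hn1
  have hk2 : k = 2 * (1 + j) := by omega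
  subst hk2
  have hz := hasSum_zeta_nat (k := 1 + j) (by omega)
  have hsummable := hz.summable
  have hzeta : zetaSum (2 * (1 + j))
      = (-1 : ℝ) ^ ((1+j) + 1) * (2 : ℝ) ^ (2 * (1+j) - 1) * π ^ (2 * (1+j)) *
        bernoulli (2 * (1+j)) / (2 * (1+j)).factorial := by
    rw [← hz.tsum_eq, zetaSum]
    rw [Summable.tsum_eq_zero_add hsummable]
    have h0 : (1:ℝ) / ((0:ℕ):ℝ) ^ (2*(1+j)) = 0 := by
      simp [zero_pow, Nat.mul_ne_zero]
    rw [h0, zero_add]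
    congr 1
    funext i
    push_cast
    ring_nf
  have hpB : pB (2*(1+j)) 0 = (-1 : ℝ)^(2*(1+j)-1) * bernoulli (2*(1+j))
      / (2*(1+j)).factorial := by
    rw [pB, Int.fract_zero, bernoulliFun_eval_zero]
  rw [cyclic_reduction _ (by omega), hpB, hzeta]
  have hfact : ((2*(1+j)).factorial : ℝ) ≠ 0 := by positivity
  have hpi : (π : ℝ) ≠ 0 := Real.pi_ne_zero
  have he1 : 2*(1+j) - 1 = 2*j + 1 := by omega
  have he3 : (2*(1+j))/2 = j + 1 := by omega
  rw [he1, he3, show 2*(1+j) = 2*j + 2 from by omega]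
  rw [mul_pow]
  field_simp
  ring_nf

end
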